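/- (Sequential step optimality) Let Γ = diag(γ₁,…,γ_M) with all γⱼ > 0 and ρ > 0. Among V ∈ ℂ^{M×L} with VᴴV = I_L, the quantity tr((Γ⁻¹ + ρVVᴴ)⁻¹) is minimized by choosing V to consist of the standard basis vectors e_{j₁},…,e_{j_L} corresponding to the L largest values of γⱼ²/(γⱼ + 1/ρ), and the minimum equals Σ_{j∉{j₁,…,j_L}} γⱼ + Σ_{k=1}^{L} γ_{j_k}/(1 + ργ_{j_k}). -/

import Mathlib

set_option maxHeartbeats 1000000

open Matrix
open scoped ComplexOrder

lemma diag_inv {n : ℕ} (v : Fin n → ℂ) (hv : ∀ i, v i ≠ 0) :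
    (Matrix.diagonal v)⁻¹ = Matrix.diagonal (fun i => (v i)⁻¹) := by
  refine Matrix.inv_eq_right_inv ?_
  rw [Matrix.diagonal_mul_diagonal]
  have : (fun i => v i * (v i)⁻¹) = fun _ => (1:ℂ) := funext fun i => mul_inv_cancel₀ (hv i)
  rw [this, Matrix.diagonal_one]

lemma posdef_aux {m l : ℕ} (W : Matrix (Fin m) (Fin l) ℂ)
    (hW : ∀ x, W.mulVec x = 0 → x = 0) : (Wᴴ * W).PosDef := by
  refine PosDef.of_dotProduct_mulVec_pos (isHermitian_conjTranspose_mul_self _) fun x hx => ?_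
  rw [← mulVec_mulVec, dotProduct_mulVec, vecMul_conjTranspose, star_star]
  have hWx : W.mulVec x ≠ 0 := fun h => hx (hW x h)
  obtain ⟨i, hi⟩ : ∃ i, W.mulVec x i ≠ 0 := by
    by_contra h; push_neg at h; exact hWx (funext h)
  refine Finset.sum_pos' (fun k _ => star_mul_self_nonneg _) ⟨i, Finset.mem_univ i, ?_⟩
  show (0:ℂ) < star (W.mulVec x i) * (W.mulVec x i)
  rw [Complex.star_def, ← Complex.normSq_eq_conj_mul_self]
  exact_mod_cast Complex.normSq_pos.mpr hi

lemma muk (g r : ℝ) (h1 : 0 < g) (h2 : 0 < r) :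
    g ^ 2 / (g + 1/r) = g - g / (1 + r * g) := by
  have h3 : g + 1/r ≠ 0 := by positivity
  have h4 : 1 + r * g ≠ 0 := by positivity
  field_simp
  ring

lemma keylem {M L : ℕ} (ι : Fin L → Fin M) (hι : Function.Injective ι)
    (μ p : Fin M → ℝ) (hμ0 : ∀ j, 0 ≤ μ j)
    (hlg : ∀ (k : Fin L) (j : Fin M), j ∉ Set.range ι → μ j ≤ μ (ι k))
    (hp0 : ∀ j, 0 ≤ p j) (hp1 : ∀ j, p j ≤ 1) (hsum : ∑ j, p j = L) :
    ∑ j, μ j * p j ≤ ∑ k, μ (ι k) := by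
  rcases Nat.eq_zero_or_pos L with hL | hL
  · subst hL
    have hz : ∀ j ∈ Finset.univ, p j = 0 :=
      (Finset.sum_eq_zero_iff_of_nonneg (fun j _ => hp0 j)).mp (by simpa using hsum)
    simp only [Finset.univ_eq_empty, Finset.sum_empty]
    refine le_of_eq (Finset.sum_eq_zero fun j _ => ?_)
    rw [hz j (Finset.mem_univ j), mul_zero]
  · haveI : Nonempty (Fin L) := ⟨⟨0, hL⟩⟩
    have hne : (Finset.univ : Finset (Fin L)).Nonempty := Finset.univ_nonempty
    obtain ⟨k₀, -, hk₀⟩ := Finset.exists_min_image Finset.univ (fun k => μ (ι k)) hne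
    set S : Finset (Fin M) := Finset.image ι Finset.univ with hS
    have hSsum : ∀ f : Fin M → ℝ, ∑ j ∈ S, f j = ∑ k, f (ι k) := fun f =>
      Finset.sum_image (fun a _ b _ h => hι h)
    have hsplit : ∀ f : Fin M → ℝ, (∑ j, f j) = ∑ j ∈ S, f j + ∑ j ∈ Sᶜ, f j := by
      intro f
      rw [add_comm, Finset.sum_compl_add_sum]
    have hmem : ∀ j, j ∈ S ↔ j ∈ Set.range ι := by
      intro j; simp [hS, Set.mem_range, eq_comm]
    -- bound off-S part
    have h1 : ∑ j ∈ Sᶜ, μ j * p j ≤ ∑ j ∈ Sᶜ, μ (ι k₀) * p j := by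
      refine Finset.sum_le_sum fun j hj => ?_
      have hjS : j ∉ Set.range ι := by
        rw [Finset.mem_compl] at hj; exact fun h => hj ((hmem j).mpr h)
      exact mul_le_mul_of_nonneg_right (hlg k₀ j hjS) (hp0 j)
    have h2 : ∑ j ∈ Sᶜ, p j = L - ∑ j ∈ S, p j := by
      have := hsplit p; rw [hsum] at this; linarith
    have hcard : (S.card : ℝ) = L := by
      rw [hS, Finset.card_image_of_injective _ hι, Finset.card_univ, Fintype.card_fin]
    have h3 : μ (ι k₀) * (∑ j ∈ Sᶜ, p j) = ∑ j ∈ S, μ (ι k₀) * (1 - p j) := by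
      rw [h2, ← hcard, ← Finset.mul_sum, Finset.sum_sub_distrib, Finset.sum_const,
        nsmul_eq_mul, mul_one]
    have h4 : ∑ j ∈ S, μ (ι k₀) * (1 - p j) ≤ ∑ j ∈ S, μ j * (1 - p j) := by
      refine Finset.sum_le_sum fun j hj => ?_
      obtain ⟨k, -, rfl⟩ := Finset.mem_image.mp hj
      exact mul_le_mul_of_nonneg_right (hk₀ k (Finset.mem_univ k)) (by linarith [hp1 (ι k)])
    calc ∑ j, μ j * p j = ∑ j ∈ S, μ j * p j + ∑ j ∈ Sᶜ, μ j * p j := hsplit _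
      _ ≤ ∑ j ∈ S, μ j * p j + ∑ j ∈ S, μ j * (1 - p j) := by
          calc ∑ j ∈ S, μ j * p j + ∑ j ∈ Sᶜ, μ j * p j
              ≤ ∑ j ∈ S, μ j * p j + μ (ι k₀) * ∑ j ∈ Sᶜ, p j := by
                rw [Finset.mul_sum]; exact add_le_add_right h1 _
            _ ≤ _ := by rw [h3]; exact add_le_add_right h4 _
      _ = ∑ j ∈ S, μ j := by rw [← Finset.sum_add_distrib]; congr 1; ext j; ring
      _ = ∑ k, μ (ι k) := hSsum _


theorem stmt18 (M L : ℕ) (γ : Fin M → ℝ) (hpos : ∀ j, 0 < γ j) (ρ : ℝ) (hρ : 0 < ρ)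
    (ι : Fin L → Fin M) (hι : Function.Injective ι)
    (hlargest : ∀ (k : Fin L) (j : Fin M), j ∉ Set.range ι →
      γ j ^ 2 / (γ j + 1 / ρ) ≤ γ (ι k) ^ 2 / (γ (ι k) + 1 / ρ))
    (Γ : Matrix (Fin M) (Fin M) ℂ) (hΓ : Γ = Matrix.diagonal fun j => (γ j : ℂ))
    (V₀ : Matrix (Fin M) (Fin L) ℂ)
    (hV₀ : V₀ = Matrix.of fun (i : Fin M) (k : Fin L) => if i = ι k then 1 else 0) :
    (∀ V : Matrix (Fin M) (Fin L) ℂ, Vᴴ * V = 1 →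
      ((∑ j ∈ (Finset.image ι Finset.univ)ᶜ, γ j
          + ∑ k, γ (ι k) / (1 + ρ * γ (ι k)) : ℝ) : ℂ) ≤
        Matrix.trace ((Γ⁻¹ + (ρ : ℂ) • (V * Vᴴ))⁻¹)) ∧
    Matrix.trace ((Γ⁻¹ + (ρ : ℂ) • (V₀ * V₀ᴴ))⁻¹) =
      ((∑ j ∈ (Finset.image ι Finset.univ)ᶜ, γ j
          + ∑ k, γ (ι k) / (1 + ρ * γ (ι k)) : ℝ) : ℂ) := by
  constructor
  · intro V hV
    classical

    have hγρ : ∀ j, (0:ℝ) < γ j + 1/ρ := fun j => add_pos (hpos j) (div_pos one_pos hρ)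
    have hγ0 : ∀ j, (γ j : ℂ) ≠ 0 := fun j => by exact_mod_cast (hpos j).ne'
    set μ : Fin M → ℝ := fun j => γ j ^ 2 / (γ j + 1/ρ) with hμ
    have hμ0 : ∀ j, 0 ≤ μ j := fun j => div_nonneg (sq_nonneg _) (hγρ j).le
    set c : Fin M → ℝ := fun j => Real.sqrt (γ j + 1/ρ) with hc
    have hc0 : ∀ j, 0 < c j := fun j => Real.sqrt_pos.mpr (hγρ j)
    have hc2 : ∀ j, c j ^ 2 = γ j + 1/ρ := fun j => Real.sq_sqrt (hγρ j).le
    set E : Matrix (Fin M) (Fin M) ℂ := Matrix.diagonal (fun j => (c j : ℂ)) with hE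
    set D : Matrix (Fin M) (Fin M) ℂ := Matrix.diagonal (fun j => (μ j : ℂ)) with hD
    have hEH : Eᴴ = E := by
      rw [hE, Matrix.diagonal_conjTranspose]
      have : (star fun j => (c j : ℂ)) = fun j => (c j : ℂ) := by
        funext j
        rw [Pi.star_apply, Complex.star_def, Complex.conj_ofReal]
      rw [this]
    have hEE : E * E = Γ + (ρ:ℂ)⁻¹ • 1 := by
      rw [hE, hΓ, Matrix.diagonal_mul_diagonal, ← Matrix.diagonal_one, ← Matrix.diagonal_smul,
        Matrix.diagonal_add]
      have : (fun j => (c j : ℂ) * c j) = fun j => (γ j : ℂ) + ((ρ:ℂ)⁻¹ • fun _ => (1:ℂ)) j := by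
        funext j
        have h : (c j : ℝ) * c j = γ j + 1/ρ := by nlinarith [hc2 j]
        simp only [Pi.smul_apply, smul_eq_mul, mul_one]
        rw [← Complex.ofReal_mul, h]
        push_cast
        ring
      rw [this]
    have hEDE : E * D * E = Γ * Γ := by
      rw [hE, hD, hΓ, Matrix.diagonal_mul_diagonal, Matrix.diagonal_mul_diagonal,
        Matrix.diagonal_mul_diagonal]
      have : (fun j => (c j : ℂ) * (μ j : ℂ) * (c j : ℂ)) = fun j => (γ j : ℂ) * (γ j : ℂ) := by
        funext j
        have h : (c j : ℝ) * μ j * c j = γ j * γ j := by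
          have h1 : c j * μ j * c j = c j ^ 2 * μ j := by ring
          have hne : γ j + 1/ρ ≠ 0 := (hγρ j).ne'
          rw [h1, hc2, hμ]
          rw [mul_comm, div_mul_cancel₀ _ hne]
          ring
        rw [← Complex.ofReal_mul, ← Complex.ofReal_mul, h, Complex.ofReal_mul]
      rw [this]
    set W : Matrix (Fin M) (Fin L) ℂ := E * V with hW
    set B : Matrix (Fin L) (Fin L) ℂ := Wᴴ * W with hB
    have hWinj : ∀ x, W.mulVec x = 0 → x = 0 := by
      intro x hx
      rw [hW, ← Matrix.mulVec_mulVec] at hx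
      have hVx : V.mulVec x = 0 := by
        funext i
        have := congrFun hx i
        rw [Matrix.mulVec_diagonal] at this
        have hci : (c i : ℂ) ≠ 0 := by exact_mod_cast (hc0 i).ne'
        simpa using (mul_eq_zero.mp this).resolve_left hci
      have : (Vᴴ * V).mulVec x = 0 := by
        rw [← Matrix.mulVec_mulVec, hVx, Matrix.mulVec_zero]
      rwa [hV, Matrix.one_mulVec] at this
    have hBpd : B.PosDef := posdef_aux W hWinj
    have hBdet : IsUnit B.det := (Matrix.isUnit_iff_isUnit_det B).mp hBpd.isUnit
    have hB1 : B * B⁻¹ = 1 := Matrix.mul_nonsing_inv B hBdet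
    have hB2 : B⁻¹ * B = 1 := Matrix.nonsing_inv_mul B hBdet
    have hBalt : B = Vᴴ * Γ * V + (ρ:ℂ)⁻¹ • 1 := by
      rw [hB, hW, Matrix.conjTranspose_mul, hEH]
      calc Vᴴ * E * (E * V) = Vᴴ * (E * E) * V := by
            rw [Matrix.mul_assoc, Matrix.mul_assoc, Matrix.mul_assoc]
        _ = Vᴴ * Γ * V + (ρ:ℂ)⁻¹ • 1 := by
            rw [hEE, Matrix.mul_add, Matrix.add_mul, Matrix.mul_smul, Matrix.smul_mul,
              Matrix.mul_one, hV, Matrix.mul_assoc]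
    have hΓi : Γ⁻¹ = Matrix.diagonal (fun j => (γ j : ℂ)⁻¹) := by rw [hΓ]; exact diag_inv _ hγ0
    have hΓ1 : Γ⁻¹ * Γ = 1 := by
      rw [hΓi, hΓ, Matrix.diagonal_mul_diagonal]
      have : (fun j => (γ j : ℂ)⁻¹ * γ j) = fun _ => (1:ℂ) := funext fun j => inv_mul_cancel₀ (hγ0 j)
      rw [this, Matrix.diagonal_one]
    -- Woodbury
    have hρc : (ρ:ℂ) ≠ 0 := by exact_mod_cast hρ.ne'
    have hVΓV : Vᴴ * (Γ * V) = B - (ρ:ℂ)⁻¹ • 1 := by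
      rw [hBalt]; rw [← Matrix.mul_assoc]; abel
    have hVΓV' : ∀ X : Matrix (Fin L) (Fin M) ℂ,
        Vᴴ * (Γ * (V * X)) = B * X - (ρ:ℂ)⁻¹ • X := by
      intro X
      calc Vᴴ * (Γ * (V * X)) = Vᴴ * (Γ * V) * X := by
            rw [Matrix.mul_assoc, Matrix.mul_assoc]
        _ = (B - (ρ:ℂ)⁻¹ • 1) * X := by rw [hVΓV]
        _ = B * X - (ρ:ℂ)⁻¹ • X := by
            rw [Matrix.sub_mul, Matrix.smul_mul, Matrix.one_mul]
    have hB1' : ∀ X : Matrix (Fin L) (Fin M) ℂ, B * (B⁻¹ * X) = X := fun X => by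
      rw [← Matrix.mul_assoc, hB1, Matrix.one_mul]
    have key : (Γ⁻¹ + (ρ:ℂ) • (V * Vᴴ)) * (Γ - Γ * V * B⁻¹ * (Vᴴ * Γ)) = 1 := by
      have hterm : Γ * V * B⁻¹ * (Vᴴ * Γ) = Γ * (V * (B⁻¹ * (Vᴴ * Γ))) := by
        rw [Matrix.mul_assoc, Matrix.mul_assoc]
      rw [hterm]
      set T : Matrix (Fin M) (Fin M) ℂ := V * (B⁻¹ * (Vᴴ * Γ)) with hT
      have e4 : Vᴴ * (Γ * T) = Vᴴ * Γ - (ρ:ℂ)⁻¹ • (B⁻¹ * (Vᴴ * Γ)) := by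
        rw [hT, hVΓV' (B⁻¹ * (Vᴴ * Γ)), hB1' (Vᴴ * Γ)]
      have e5 : V * Vᴴ * (Γ * T) = V * (Vᴴ * Γ) - (ρ:ℂ)⁻¹ • T := by
        rw [Matrix.mul_assoc, e4, Matrix.mul_sub, Matrix.mul_smul, hT]
      have e6 : V * Vᴴ * Γ = V * (Vᴴ * Γ) := Matrix.mul_assoc _ _ _
      have hΓ1T : Γ⁻¹ * (Γ * T) = T := by rw [← Matrix.mul_assoc, hΓ1, Matrix.one_mul]
      simp only [Matrix.add_mul, Matrix.mul_sub, Matrix.smul_mul]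
      rw [hΓ1, hΓ1T, e5, e6, smul_sub, smul_smul, mul_inv_cancel₀ hρc, one_smul]
      abel
    have hAinv : (Γ⁻¹ + (ρ:ℂ) • (V * Vᴴ))⁻¹ = Γ - Γ * V * B⁻¹ * (Vᴴ * Γ) :=
      Matrix.inv_eq_right_inv key
    -- trace manipulation
    set P : Matrix (Fin M) (Fin M) ℂ := W * B⁻¹ * Wᴴ with hP
    have hWH : Wᴴ = Vᴴ * E := by rw [hW, Matrix.conjTranspose_mul, hEH]
    have hEDE' : ∀ X : Matrix (Fin M) (Fin L) ℂ, Γ * (Γ * X) = E * (D * (E * X)) := by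
      intro X
      calc Γ * (Γ * X) = Γ * Γ * X := (Matrix.mul_assoc _ _ _).symm
        _ = E * D * E * X := by rw [hEDE]
        _ = E * (D * (E * X)) := by rw [Matrix.mul_assoc, Matrix.mul_assoc]
    have step1 : Vᴴ * Γ * (Γ * V * B⁻¹) = Wᴴ * (D * (W * B⁻¹)) := by
      rw [hWH, hW]
      simp only [Matrix.mul_assoc]
      rw [← hEDE' (V * B⁻¹)]
    have htrace2 : Matrix.trace (Γ * V * B⁻¹ * (Vᴴ * Γ)) = Matrix.trace (D * P) := by
      rw [Matrix.trace_mul_comm, step1, Matrix.trace_mul_comm, hP, Matrix.mul_assoc]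
    have hBiH : B⁻¹ᴴ = B⁻¹ := by
      rw [Matrix.conjTranspose_nonsing_inv, hBpd.1.eq]
    have hPH : Pᴴ = P := by
      rw [hP]
      calc (W * B⁻¹ * Wᴴ)ᴴ = Wᴴᴴ * (W * B⁻¹)ᴴ := Matrix.conjTranspose_mul _ _
        _ = W * (B⁻¹ᴴ * Wᴴ) := by
            rw [Matrix.conjTranspose_conjTranspose, Matrix.conjTranspose_mul, Matrix.mul_assoc]
        _ = W * B⁻¹ * Wᴴ := by rw [hBiH, ← Matrix.mul_assoc]
    have hWW' : ∀ X : Matrix (Fin L) (Fin M) ℂ, Wᴴ * (W * X) = B * X := fun X => by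
      rw [← Matrix.mul_assoc, ← hB]
    have hB2' : ∀ X : Matrix (Fin L) (Fin M) ℂ, B⁻¹ * (B * X) = X := fun X => by
      rw [← Matrix.mul_assoc, hB2, Matrix.one_mul]
    have hPP : P * P = P := by
      rw [hP]
      simp only [Matrix.mul_assoc]
      rw [hWW' (B⁻¹ * Wᴴ), hB2' (B⁻¹ * Wᴴ)]
    have htrP : Matrix.trace P = (L : ℂ) := by
      rw [hP, Matrix.trace_mul_comm, ← Matrix.mul_assoc, ← hB, hB1, Matrix.trace_one]
      simp
    have hPHP : Pᴴ * P = P := by rw [hPH, hPP]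
    set p : Fin M → ℝ := fun j => ∑ k, Complex.normSq (P k j) with hp
    have hPjj : ∀ j, P j j = ((p j : ℝ) : ℂ) := by
      intro j
      calc P j j = (Pᴴ * P) j j := by rw [hPHP]
        _ = ∑ k, star (P k j) * P k j := by
            simp [Matrix.mul_apply, Matrix.conjTranspose_apply]
        _ = ∑ k, ((Complex.normSq (P k j) : ℝ) : ℂ) := by
            refine Finset.sum_congr rfl fun k _ => ?_
            rw [Complex.star_def, ← Complex.normSq_eq_conj_mul_self]
        _ = ((p j : ℝ) : ℂ) := by rw [hp, Complex.ofReal_sum]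
    have hp0 : ∀ j, 0 ≤ p j := fun j =>
      Finset.sum_nonneg fun k _ => Complex.normSq_nonneg _
    have hp1 : ∀ j, p j ≤ 1 := by
      intro j
      have h1 : Complex.normSq (P j j) ≤ p j :=
        Finset.single_le_sum (fun k _ => Complex.normSq_nonneg (P k j)) (Finset.mem_univ j)
      have h2 : Complex.normSq (P j j) = p j * p j := by
        rw [hPjj j, Complex.normSq_ofReal]
      nlinarith [hp0 j]
    have hpsum : ∑ j, p j = L := by
      have h := htrP
      rw [Matrix.trace] at h
      have h2 : ∑ j, P.diag j = ((∑ j, p j : ℝ) : ℂ) := by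
        rw [Complex.ofReal_sum]
        exact Finset.sum_congr rfl fun j _ => hPjj j
      rw [h2] at h
      exact_mod_cast h
    have htrDP : Matrix.trace (D * P) = ((∑ j, μ j * p j : ℝ) : ℂ) := by
      rw [Matrix.trace, Complex.ofReal_sum]
      refine Finset.sum_congr rfl fun j _ => ?_
      rw [Matrix.diag]
      rw [hD, Matrix.diagonal_mul, hPjj j]
      push_cast
      ring
    -- the key inequality
    have hkey : ∑ j, μ j * p j ≤ ∑ k, μ (ι k) :=
      keylem ι hι μ p hμ0 hlargest hp0 hp1 hpsum
    have hμk : ∀ k, μ (ι k) = γ (ι k) - γ (ι k) / (1 + ρ * γ (ι k)) := by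
      intro k
      rw [hμ]
      exact muk _ _ (hpos (ι k)) hρ
    have hsplitγ : ∑ j ∈ (Finset.image ι Finset.univ)ᶜ, γ j + ∑ k, γ (ι k) = ∑ j, γ j := by
      have h := Finset.sum_compl_add_sum (Finset.image ι Finset.univ) γ
      rw [Finset.sum_image (fun a _ b _ h => hι h)] at h
      exact h
    have hreal : (∑ j ∈ (Finset.image ι Finset.univ)ᶜ, γ j
        + ∑ k, γ (ι k) / (1 + ρ * γ (ι k)) : ℝ) ≤ ∑ j, γ j - ∑ j, μ j * p j := by
      have h3 : ∑ k, μ (ι k) = ∑ k, (γ (ι k) - γ (ι k) / (1 + ρ * γ (ι k))) :=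
        Finset.sum_congr rfl fun k _ => hμk k
      rw [Finset.sum_sub_distrib] at h3
      linarith [hkey, hsplitγ]
    rw [hAinv, Matrix.trace_sub, htrace2, htrDP, hΓ, Matrix.trace_diagonal]
    have hγsum : (∑ j, ((γ j : ℝ) : ℂ)) = ((∑ j, γ j : ℝ) : ℂ) := (Complex.ofReal_sum _ _).symm
    rw [hγsum, ← Complex.ofReal_sub]
    exact_mod_cast hreal

  · 
    have hγ0 : ∀ j, (γ j : ℂ) ≠ 0 := fun j => by exact_mod_cast (hpos j).ne'
    have hVV : V₀ * V₀ᴴ = Matrix.diagonal (fun i => if i ∈ Set.range ι then (1:ℂ) else 0) := by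
      subst hV₀
      ext i j
      simp only [Matrix.mul_apply, Matrix.conjTranspose_apply, Matrix.of_apply]
      by_cases hij : i = j
      · subst hij
        rw [Matrix.diagonal_apply_eq]
        by_cases hr : i ∈ Set.range ι
        · obtain ⟨k, rfl⟩ := hr
          rw [Finset.sum_eq_single k, if_pos rfl, if_pos ⟨k, rfl⟩]
          · simp
          · intro b _ hb
            have : ι k ≠ ι b := fun h => hb (hι h).symm
            simp [this]
          · simp
        · rw [if_neg hr, Finset.sum_eq_zero]
          intro k _
          have : i ≠ ι k := fun h => hr ⟨k, h.symm⟩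
          simp [this]
      · rw [Matrix.diagonal_apply_ne _ hij, Finset.sum_eq_zero]
        intro k _
        by_cases h1 : i = ι k
        · have h2 : j ≠ ι k := fun h => hij (h1.trans h.symm)
          simp [h1, h2]
        · simp [h1]
    -- now the whole matrix is diagonal
    set d : Fin M → ℂ := fun j => (γ j : ℂ)⁻¹ + if j ∈ Set.range ι then (ρ:ℂ) else 0 with hd
    have hd0 : ∀ j, d j ≠ 0 := by
      intro j
      have hγj : (0:ℝ) < γ j := hpos j
      by_cases hr : j ∈ Set.range ι
      · simp only [hd, hr, if_true]
        rw [← Complex.ofReal_inv, ← Complex.ofReal_add]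
        intro h
        have := Complex.ofReal_eq_zero.mp h
        nlinarith [inv_pos.mpr hγj]
      · simp only [hd, hr, if_false, add_zero, ← Complex.ofReal_inv]
        intro h
        have := Complex.ofReal_eq_zero.mp h
        nlinarith [inv_pos.mpr hγj]
    have hmain : Γ⁻¹ + (ρ : ℂ) • (V₀ * V₀ᴴ) = Matrix.diagonal d := by
      rw [hVV, hΓ, diag_inv _ hγ0]
      ext i j
      by_cases hij : i = j
      · subst hij
        simp [Matrix.diagonal_apply_eq, hd, mul_ite]
      · simp [Matrix.diagonal_apply_ne _ hij, hij]
    rw [hmain, diag_inv _ hd0, Matrix.trace_diagonal]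
    -- split the sum
    have hmem : ∀ j, j ∈ Finset.image ι Finset.univ ↔ j ∈ Set.range ι := by
      intro j; simp
    rw [← Finset.sum_compl_add_sum (Finset.image ι Finset.univ) (fun j => (d j)⁻¹)]
    push_cast
    congr 1
    · refine Finset.sum_congr rfl fun j hj => ?_
      have hr : j ∉ Set.range ι := fun h => (Finset.mem_compl.mp hj) ((hmem j).mpr h)
      simp only [hd, hr, if_false, add_zero, inv_inv]
    · rw [Finset.sum_image (fun a _ b _ h => hι h)]
      refine Finset.sum_congr rfl fun k _ => ?_
      have hr : ι k ∈ Set.range ι := ⟨k, rfl⟩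
      simp only [hd, hr, if_true]
      have hγk : (γ (ι k) : ℂ) ≠ 0 := hγ0 _
      have h1 : (1 + ρ * γ (ι k) : ℝ) ≠ 0 := by nlinarith [hpos (ι k)]
      have h1c : ((1 + ρ * γ (ι k) : ℝ) : ℂ) ≠ 0 := by exact_mod_cast h1
      field_simp
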